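/- Let Σ be a finite preordered alphabet and let U ⊆ Σ* be upwards-closed for the subword ordering. Then U is a regular language: there exists a DFA over Σ with a finite set of states whose recognized language is exactly U. -/

import Mathlib

/-- Extension of a transition function `δ : Σ × Q → Q` to words:
`δ*(ε,q) = q` and `δ*(wσ,q) = δ(σ, δ*(w,q))`. -/
def deltaStar {σ Q : Type*} (δ : σ → Q → Q) (w : List σ) (q : Q) : Q :=
  w.foldl (fun p a => δ a p) q

open List

theorem forall₂_append_of {α β : Type*} {r : α → β → Prop} {l₁ l₃ : List α} {l₂ l₄ : List β}
    (h : Forall₂ r l₁ l₂) (h' : Forall₂ r l₃ l₄) : Forall₂ r (l₁ ++ l₃) (l₂ ++ l₄) := by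
  induction h with
  | nil => simpa
  | cons hab _ ih => exact Forall₂.cons hab ih

section Basis

/-- Every partially well-ordered set has a finite basis. -/
theorem pwo_exists_finite_basis {α : Type*} {r : α → α → Prop} {s : Set α}
    (h : s.PartiallyWellOrderedOn r) :
    ∃ (k : ℕ) (g : Fin k → α), (∀ i, g i ∈ s) ∧ ∀ x ∈ s, ∃ i, r (g i) x := by
  by_contra hc
  push_neg at hc
  -- build a bad sequence
  have pick : ∀ (k : ℕ) (g : Fin k → α), (∀ i, g i ∈ s) →
      ∃ x, x ∈ s ∧ ∀ i, ¬ r (g i) x := by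
    intro k g hg
    obtain ⟨x, hx1, hx2⟩ := hc k g hg
    exact ⟨x, hx1, hx2⟩
  classical
  let T : (n : ℕ) → {g : Fin n → α // ∀ i, g i ∈ s} := fun n =>
    Nat.rec ⟨(fun i => absurd i.2 (Nat.not_lt_zero _)), fun i => absurd i.2 (Nat.not_lt_zero _)⟩
      (fun n ih =>
        ⟨Fin.snoc ih.1 (pick n ih.1 ih.2).choose, by
          intro i
          refine Fin.lastCases ?_ ?_ i
          · simpa [Fin.snoc] using (pick n ih.1 ih.2).choose_spec.1
          · intro j; simpa [Fin.snoc_castSucc] using ih.2 j⟩) n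
  have hstep : ∀ n, (T (n+1)).1 =
      Fin.snoc (T n).1 (pick n (T n).1 (T n).2).choose := fun n => rfl
  have hcast : ∀ n (i : Fin n), (T (n+1)).1 i.castSucc = (T n).1 i := by
    intro n i; rw [hstep]; exact Fin.snoc_castSucc _ _ _
  let f : ℕ → α := fun n => (T (n+1)).1 (Fin.last n)
  have hcoh : ∀ n (m : ℕ) (hm : m < n), (T n).1 ⟨m, hm⟩ = f m := by
    intro n
    induction n with
    | zero => intro m hm; exact absurd hm (Nat.not_lt_zero _)
    | succ n ih =>
      intro m hm
      rcases Nat.lt_succ_iff_lt_or_eq.1 hm with h' | rfl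
      · have := hcast n ⟨m, h'⟩
        rw [show (⟨m, hm⟩ : Fin (n+1)) = (⟨m, h'⟩ : Fin n).castSucc from rfl, this]
        exact ih m h'
      · rfl
  have hfmem : ∀ n, f n ∈ s := fun n => (T (n+1)).2 _
  obtain ⟨m, n, hmn, hr⟩ := h (fun n => ⟨f n, hfmem n⟩)
  -- f n was chosen to not be above (T n).1, and f m = (T n).1 ⟨m, hmn⟩
  have : ∀ i, ¬ r ((T n).1 i) (f n) := by
    have h2 := (pick n (T n).1 (T n).2).choose_spec.2
    intro i
    have : f n = (pick n (T n).1 (T n).2).choose := by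
      show (T (n+1)).1 (Fin.last n) = _
      rw [hstep]; exact Fin.snoc_last _ _
    rw [this]; exact h2 i
  exact this ⟨m, hmn⟩ (by rw [hcoh n m hmn]; exact hr)

end Basis

section SLF

variable {α : Type*} {r : α → α → Prop}

theorem slf_extend {l w : List α} (a : α) (h : SublistForall₂ r l w) :
    SublistForall₂ r l (w ++ [a]) := by
  rw [sublistForall₂_iff] at h ⊢
  obtain ⟨l', h1, h2⟩ := h
  exact ⟨l', h1, h2.trans (sublist_append_left _ _)⟩

theorem slf_snoc {l w : List α} {b a : α} (h : SublistForall₂ r l w) (hba : r b a) :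
    SublistForall₂ r (l ++ [b]) (w ++ [a]) := by
  rw [sublistForall₂_iff] at h ⊢
  obtain ⟨l', h1, h2⟩ := h
  exact ⟨l' ++ [a], forall₂_append_of h1 (Forall₂.cons hba Forall₂.nil), h2.append (Sublist.refl _)⟩

theorem slf_concat_inv {l w : List α} {b a : α}
    (h : SublistForall₂ r (l ++ [b]) (w ++ [a])) :
    SublistForall₂ r (l ++ [b]) w ∨ (r b a ∧ SublistForall₂ r l w) := by
  rw [sublistForall₂_iff] at h
  obtain ⟨s, h1, h2⟩ := h
  rw [sublist_append_iff] at h2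
  obtain ⟨s₁, s₂, rfl, hs₁, hs₂⟩ := h2
  rcases sublist_singleton.mp hs₂ with rfl | rfl
  · left
    rw [sublistForall₂_iff]
    exact ⟨s₁, by simpa using h1, hs₁⟩
  · right
    rw [← forall₂_reverse_iff] at h1
    simp only [reverse_append, reverse_singleton, singleton_append, cons_append,
      nil_append] at h1
    rcases h1 with _ | ⟨hba, h1⟩
    rw [forall₂_reverse_iff] at h1
    exact ⟨hba, sublistForall₂_iff.2 ⟨s₁, h1, hs₁⟩⟩

theorem slf_nil_right {l : List α} (h : SublistForall₂ r l []) : l = [] := by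
  cases h; rfl

end SLF

section Greedy

variable {σ : Type*} [Preorder σ]

open Classical in
/-- Greedy matching step for the upward closure of a single word `m`. -/
noncomputable def gstep (m : List σ) (a : σ) (p : ℕ) : ℕ :=
  if h : p < m.length then (if m.get ⟨p, h⟩ ≤ a then p + 1 else p) else p

theorem gstep_ge (m : List σ) (a : σ) (p : ℕ) : p ≤ gstep m a p := by
  unfold gstep
  split
  · split <;> omega
  · omega

theorem gstep_le (m : List σ) (a : σ) {p : ℕ} (hp : p ≤ m.length) :
    gstep m a p ≤ m.length := by
  unfold gstep
  split
  · split <;> omega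
  · omega

/-- Greedy matching state after reading `w`. -/
noncomputable def gs (m : List σ) (w : List σ) : ℕ := deltaStar (gstep m) w 0

theorem deltaStar_append {σ Q : Type*} (δ : σ → Q → Q) (w : List σ) (a : σ) (q : Q) :
    deltaStar δ (w ++ [a]) q = δ a (deltaStar δ w q) := by
  simp [deltaStar, List.foldl_append]

theorem gs_append (m w : List σ) (a : σ) : gs m (w ++ [a]) = gstep m a (gs m w) :=
  deltaStar_append _ _ _ _

theorem gs_le (m w : List σ) : gs m w ≤ m.length := by
  induction w using List.reverseRecOn with
  | nil => simp [gs, deltaStar]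
  | append_singleton w a ih => rw [gs_append]; exact gstep_le m a ih

theorem gs_nil (m : List σ) : gs m [] = 0 := rfl

theorem gs_sound (m w : List σ) :
    SublistForall₂ (· ≤ ·) (m.take (gs m w)) w := by
  induction w using List.reverseRecOn with
  | nil => rw [gs_nil]; simpa using SublistForall₂.nil
  | append_singleton w a ih =>
    rw [gs_append]
    unfold gstep
    split
    · rename_i h
      split
      · rename_i hle
        rw [← List.take_concat_get' m _ h]
        exact slf_snoc ih hle
      · exact slf_extend a ih
    · exact slf_extend a ih

theorem gs_mono (m w : List σ) (a : σ) : gs m w ≤ gs m (w ++ [a]) := by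
  rw [gs_append]; exact gstep_ge _ _ _

theorem gs_complete (m w : List σ) :
    ∀ p ≤ m.length, SublistForall₂ (· ≤ ·) (m.take p) w → p ≤ gs m w := by
  induction w using List.reverseRecOn with
  | nil =>
    intro p hp h
    have := slf_nil_right h
    have hl : (m.take p).length = 0 := by rw [this]; rfl
    rw [List.length_take] at hl
    omega
  | append_singleton w a ih =>
    intro p hp h
    match p, hp with
    | 0, _ => exact Nat.zero_le _
    | (q+1), hp =>
      have hq : q < m.length := hp
      rw [← List.take_concat_get' m q hq] at h
      rcases slf_concat_inv h with h' | ⟨hle, h'⟩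
      · rw [List.take_concat_get' m q hq] at h'
        exact le_trans (ih (q+1) hp h') (gs_mono m w a)
      · have hqle : q ≤ gs m w := ih q (le_of_lt hq) h'
        rcases lt_or_eq_of_le hqle with h'' | h''
        · exact le_trans h'' (gs_mono m w a)
        · rw [gs_append, ← h'']
          unfold gstep
          rw [dif_pos hq, if_pos (show m.get ⟨q, hq⟩ ≤ a from hle)]
  
theorem gs_iff (m w : List σ) :
    SublistForall₂ (· ≤ ·) m w ↔ gs m w = m.length := by
  constructor
  · intro h
    have := gs_complete m w m.length (le_refl _) (by rwa [List.take_length])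
    exact le_antisymm (gs_le m w) this
  · intro h
    have := gs_sound m w
    rwa [h, List.take_length] at this

end Greedy

/-- Over a finite preordered alphabet, every language upwards-closed for the
subword ordering is recognized by a DFA with finitely many states. -/
theorem upwardClosed_regular {σ : Type*} [Preorder σ] [Fintype σ]
    (U : Set (List σ))
    (hU : ∀ w w' : List σ, w ∈ U → List.SublistForall₂ (· ≤ ·) w w' → w' ∈ U) :
    ∃ (Q : Type) (_ : Fintype Q) (q0 : Q) (δ : σ → Q → Q) (F : Set Q),
      ∀ w : List σ, w ∈ U ↔ deltaStar δ w q0 ∈ F := by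
  classical
  -- U is PWO under the subword ordering (Higman)
  have huniv : (Set.univ : Set σ).PartiallyWellOrderedOn (· ≤ ·) :=
    Set.finite_univ.partiallyWellOrderedOn
  have hpwo : U.PartiallyWellOrderedOn (List.SublistForall₂ (· ≤ ·)) := by
    refine (Set.PartiallyWellOrderedOn.partiallyWellOrderedOn_sublistForall₂ _ huniv).mono ?_
    intro l _; simp
  obtain ⟨k, ms, hmem, hbasis⟩ := pwo_exists_finite_basis hpwo
  let Qt : Type := (i : Fin k) → Fin ((ms i).length + 1)
  let δfun : σ → Qt → Qt := fun a q i =>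
    ⟨gstep (ms i) a (q i), Nat.lt_succ_of_le (gstep_le _ _ (Nat.lt_succ_iff.mp (q i).2))⟩
  refine ⟨Qt, inferInstance, fun i => ⟨0, Nat.succ_pos _⟩, δfun,
    {q | ∃ i, (q i : ℕ) = (ms i).length}, ?_⟩
  have key : ∀ (w : List σ) (q : Qt) (i : Fin k),
      ((deltaStar δfun w q i : ℕ)) = deltaStar (gstep (ms i)) w (q i) := by
    intro w
    induction w with
    | nil => intro q i; rfl
    | cons a w ih =>
      intro q i
      show ((deltaStar δfun w (δfun a q)) i : ℕ)
        = deltaStar (gstep (ms i)) w (gstep (ms i) a (q i))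
      rw [ih]
  intro w
  constructor
  · intro hw
    obtain ⟨i, hi⟩ := hbasis w hw
    exact ⟨i, by rw [key]; exact (gs_iff (ms i) w).1 hi⟩
  · rintro ⟨i, hi⟩
    rw [key] at hi
    exact hU (ms i) w (hmem i) ((gs_iff (ms i) w).2 hi)
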